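/- Let K be a sub-Markov kernel on a measurable space (X,𝒳), let λ>0 and let x∈X be such that Z := ∑_{ℓ=0}^∞ λ^{-ℓ}K^ℓ(x,X) < ∞. Define the probability measure μ = Z^{-1} ∑_{ℓ=0}^∞ λ^{-ℓ}K^ℓ(x,·). Then μK = λμ − (λ/Z)δ_x; in particular μK ≤ λμ as measures, μK^ℓ ≤ λ^ℓ μ for every ℓ ≥ 1, and for every a₁ > λ one has ∫_X μ(dy) ∑_{ℓ=0}^∞ a₁^{-ℓ}K^ℓ(y,X) ≤ a₁/(a₁−λ). -/

import Mathlib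

open MeasureTheory Filter Topology ProbabilityTheory
open scoped ENNReal NNReal

namespace QSDgen

variable {X : Type*}

/-- Iterates `K^ℓ` of a (sub-Markov) kernel, seen as measure-valued maps:
`K^0(x,·) = δ_x` and `K^{ℓ+1}(x,·) = ∫ K^ℓ(x,dy) K(y,·)`. -/
noncomputable def kpow [MeasurableSpace X] (K : Kernel X X) : ℕ → X → Measure X
  | 0, x => Measure.dirac x
  | (n + 1), x => (kpow K n x).bind fun y => K y

lemma kpow_measurable [MeasurableSpace X] (K : Kernel X X) (n : ℕ) :
    Measurable (kpow K n) := by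
  induction n with
  | zero => exact Measure.measurable_dirac
  | succ n ih => exact (Measure.measurable_bind' K.measurable).comp ih

lemma kpow_univ_le [MeasurableSpace X] (K : Kernel X X) (hsub : ∀ x, K x Set.univ ≤ 1)
    (n : ℕ) (y : X) : kpow K n y Set.univ ≤ 1 := by
  induction n with
  | zero => simp [kpow]
  | succ n ih =>
      rw [kpow, Measure.bind_apply MeasurableSet.univ K.measurable.aemeasurable]
      calc ∫⁻ z, K z Set.univ ∂(kpow K n y) ≤ ∫⁻ _, 1 ∂(kpow K n y) :=
            lintegral_mono fun z => hsub z
        _ = kpow K n y Set.univ := by simp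
        _ ≤ 1 := ih

/-- **Lemma.** If `K` is a sub-Markov kernel, `λ > 0` and `x` satisfies
`Z = ∑_ℓ λ^{-ℓ} K^ℓ(x,X) < ∞`, then the probability measure
`μ = Z^{-1} ∑_ℓ λ^{-ℓ} K^ℓ(x,·)` satisfies `μK = λμ - (λ/Z) δ_x`, hence `μK ≤ λμ`,
`μK^ℓ ≤ λ^ℓ μ` for all `ℓ ≥ 1`, and `∫ μ(dy) ∑_ℓ a₁^{-ℓ} K^ℓ(y,X) ≤ a₁/(a₁-λ)` for every
`a₁ > λ`. -/
theorem resolvent_measure_properties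
    [MeasurableSpace X] (K : Kernel X X) (hsub : ∀ x, K x Set.univ ≤ 1)
    (lam : ℝ) (hlam : 0 < lam) (x : X)
    (hZfin : (∑' ℓ : ℕ, ENNReal.ofReal (lam⁻¹ ^ ℓ) * kpow K ℓ x Set.univ) < ⊤) :
    ∀ Z : ℝ≥0∞, Z = (∑' ℓ : ℕ, ENNReal.ofReal (lam⁻¹ ^ ℓ) * kpow K ℓ x Set.univ) →
    ∀ μ : Measure X,
      μ = Z⁻¹ • Measure.sum (fun ℓ : ℕ => ENNReal.ofReal (lam⁻¹ ^ ℓ) • kpow K ℓ x) →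
      IsProbabilityMeasure μ ∧
      μ.bind (fun y => K y) + (ENNReal.ofReal lam * Z⁻¹) • Measure.dirac x =
        ENNReal.ofReal lam • μ ∧
      (∀ ℓ : ℕ, 1 ≤ ℓ → ∀ s : Set X, MeasurableSet s →
        μ.bind (fun y => kpow K ℓ y) s ≤ ENNReal.ofReal (lam ^ ℓ) * μ s) ∧
      ∀ a₁ : ℝ, lam < a₁ →
        (∫⁻ y, (∑' ℓ : ℕ, ENNReal.ofReal (a₁⁻¹ ^ ℓ) * kpow K ℓ y Set.univ) ∂μ) ≤
          ENNReal.ofReal (a₁ / (a₁ - lam)) := by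
  intro Z hZ μ hμ
  set L : ℝ≥0∞ := ENNReal.ofReal lam with hL
  set r : ℝ≥0∞ := ENNReal.ofReal lam⁻¹ with hr
  have hc : ∀ ℓ : ℕ, ENNReal.ofReal (lam⁻¹ ^ ℓ) = r ^ ℓ := fun ℓ =>
    ENNReal.ofReal_pow (inv_nonneg.2 hlam.le) ℓ
  have hrL : r * L = 1 := by
    rw [hr, hL, ← ENNReal.ofReal_mul (inv_nonneg.2 hlam.le), inv_mul_cancel₀ hlam.ne',
      ENNReal.ofReal_one]
  set ν : Measure X := Measure.sum (fun ℓ : ℕ => ENNReal.ofReal (lam⁻¹ ^ ℓ) • kpow K ℓ x) with hν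
  -- total mass of ν is Z
  have hνs : ∀ s : Set X, MeasurableSet s → ν s = ∑' ℓ : ℕ, r ^ ℓ * kpow K ℓ x s := by
    intro s hs
    rw [hν, Measure.sum_apply _ hs]
    simp_rw [Measure.smul_apply, smul_eq_mul, hc]
  have hνuniv : ν Set.univ = Z := by
    rw [hνs Set.univ MeasurableSet.univ, hZ]
    simp_rw [hc]
  have hZ1 : (1 : ℝ≥0∞) ≤ Z := by
    rw [hZ]
    calc (1 : ℝ≥0∞) = ENNReal.ofReal (lam⁻¹ ^ 0) * kpow K 0 x Set.univ := by simp [kpow]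
      _ ≤ _ := ENNReal.le_tsum 0
  have hZ0 : Z ≠ 0 := fun h => by simp [h] at hZ1
  have hZtop : Z ≠ ⊤ := by rw [hZ]; exact hZfin.ne
  have hZinv : Z⁻¹ * Z = 1 := ENNReal.inv_mul_cancel hZ0 hZtop
  -- probability
  have hprob : IsProbabilityMeasure μ := by
    constructor
    rw [hμ, Measure.smul_apply, smul_eq_mul, hνuniv, hZinv]
  -- key identity
  have key : ν.bind (fun y => K y) + L • Measure.dirac x = L • ν := by
    ext s hs
    have hbind : ν.bind (fun y => K y) s = ∑' ℓ : ℕ, r ^ ℓ * kpow K (ℓ + 1) x s := by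
      rw [Measure.bind_apply hs K.measurable.aemeasurable, hν, lintegral_sum_measure]
      congr 1
      funext ℓ
      rw [lintegral_smul_measure, hc, ← Measure.bind_apply hs K.measurable.aemeasurable]
      rfl
    have hRHS : (L • ν) s = L * Measure.dirac x s + ∑' ℓ : ℕ, r ^ ℓ * kpow K (ℓ + 1) x s := by
      rw [Measure.smul_apply, smul_eq_mul, hνs s hs, ← ENNReal.tsum_mul_left,
        tsum_eq_zero_add' ENNReal.summable]
      congr 1
      · simp [kpow]
      · congr 1
        funext ℓ
        rw [pow_succ]
        calc L * (r ^ ℓ * r * kpow K (ℓ + 1) x s)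
            = (r * L) * (r ^ ℓ * kpow K (ℓ + 1) x s) := by ring
          _ = r ^ ℓ * kpow K (ℓ + 1) x s := by rw [hrL, one_mul]
    simp only [Measure.add_apply, Measure.smul_apply, smul_eq_mul, hbind, hRHS]
    ring
  have hbind_smul : μ.bind (fun y => K y) = Z⁻¹ • (ν.bind (fun y => K y)) := by
    ext s hs
    rw [hμ, Measure.bind_apply hs K.measurable.aemeasurable, lintegral_smul_measure, Measure.smul_apply,
      smul_eq_mul, Measure.bind_apply hs K.measurable.aemeasurable, smul_eq_mul]
  have hmain : μ.bind (fun y => K y) + (L * Z⁻¹) • Measure.dirac x = L • μ := by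
    calc μ.bind (fun y => K y) + (L * Z⁻¹) • Measure.dirac x
        = Z⁻¹ • (ν.bind (fun y => K y) + L • Measure.dirac x) := by
          rw [smul_add, hbind_smul, smul_smul, mul_comm L Z⁻¹]
      _ = Z⁻¹ • (L • ν) := by rw [key]
      _ = L • μ := by rw [hμ, smul_comm]
  -- first-power bound
  have hK1 : ∀ s : Set X, MeasurableSet s → μ.bind (fun y => K y) s ≤ L * μ s := by
    intro s hs
    have := congrArg (fun m : Measure X => m s) hmain
    simp only [Measure.add_apply, Measure.smul_apply, smul_eq_mul] at this
    calc μ.bind (fun y => K y) s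
        ≤ μ.bind (fun y => K y) s + L * Z⁻¹ * Measure.dirac x s := le_self_add
      _ = L * μ s := this
  -- all-power bound
  have hP : ∀ n : ℕ, ∀ s : Set X, MeasurableSet s →
      μ.bind (fun y => kpow K n y) s ≤ L ^ n * μ s := by
    intro n
    induction n with
    | zero =>
        intro s hs
        have h0 : (fun y : X => kpow K 0 y) = Measure.dirac := by funext y; simp [kpow]
        rw [h0, Measure.bind_dirac, pow_zero, one_mul]
    | succ n ih =>
        intro s hs
        have hstep : (fun y : X => kpow K (n + 1) y)
            = fun y => (kpow K n y).bind fun z => K z := by funext y; rw [kpow]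
        have hle : μ.bind (fun y => kpow K n y) ≤ (L ^ n) • μ := by
          refine Measure.le_iff.2 fun t ht => ?_
          rw [Measure.smul_apply, smul_eq_mul]
          exact ih t ht
        rw [hstep, ← Measure.bind_bind (kpow_measurable K n).aemeasurable K.measurable.aemeasurable,
          Measure.bind_apply hs K.measurable.aemeasurable]
        calc ∫⁻ z, K z s ∂(μ.bind fun y => kpow K n y)
            ≤ ∫⁻ z, K z s ∂((L ^ n) • μ) := lintegral_mono' hle le_rfl
          _ = L ^ n * ∫⁻ z, K z s ∂μ := lintegral_smul_measure _ _
          _ = L ^ n * μ.bind (fun y => K y) s := by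
              rw [Measure.bind_apply hs K.measurable.aemeasurable]
          _ ≤ L ^ n * (L * μ s) := mul_le_mul_right (hK1 s hs) _
          _ = L ^ (n + 1) * μ s := by rw [pow_succ]; ring
  refine ⟨hprob, hmain, ?_, ?_⟩
  · intro ℓ _ s hs
    calc μ.bind (fun y => kpow K ℓ y) s ≤ L ^ ℓ * μ s := hP ℓ s hs
      _ = ENNReal.ofReal (lam ^ ℓ) * μ s := by rw [ENNReal.ofReal_pow hlam.le]
  · intro a₁ ha
    have ha₁ : 0 < a₁ := hlam.trans ha
    set b : ℝ≥0∞ := ENNReal.ofReal a₁⁻¹ with hb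
    have hbc : ∀ ℓ : ℕ, ENNReal.ofReal (a₁⁻¹ ^ ℓ) = b ^ ℓ := fun ℓ =>
      ENNReal.ofReal_pow (inv_nonneg.2 ha₁.le) ℓ
    have hbL : b * L = ENNReal.ofReal (a₁⁻¹ * lam) := by
      rw [hb, hL, ENNReal.ofReal_mul (inv_nonneg.2 ha₁.le)]
    have ht0 : 0 ≤ a₁⁻¹ * lam := mul_nonneg (inv_nonneg.2 ha₁.le) hlam.le
    have ht1 : a₁⁻¹ * lam < 1 := by
      rw [inv_mul_lt_iff₀ ha₁, mul_one]; exact ha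
    calc (∫⁻ y, (∑' ℓ : ℕ, ENNReal.ofReal (a₁⁻¹ ^ ℓ) * kpow K ℓ y Set.univ) ∂μ)
        = ∑' ℓ : ℕ, ∫⁻ y, b ^ ℓ * kpow K ℓ y Set.univ ∂μ := by
          simp_rw [hbc]
          exact lintegral_tsum fun ℓ => (measurable_const.mul
            ((Measure.measurable_coe MeasurableSet.univ).comp (kpow_measurable K ℓ))).aemeasurable
      _ = ∑' ℓ : ℕ, b ^ ℓ * μ.bind (fun y => kpow K ℓ y) Set.univ := by
          congr 1
          funext ℓ
          rw [lintegral_const_mul' _ _ (ENNReal.pow_ne_top ENNReal.ofReal_ne_top),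
            Measure.bind_apply MeasurableSet.univ (kpow_measurable K ℓ).aemeasurable]
      _ ≤ ∑' ℓ : ℕ, (b * L) ^ ℓ := by
          refine ENNReal.tsum_le_tsum fun ℓ => ?_
          calc b ^ ℓ * μ.bind (fun y => kpow K ℓ y) Set.univ
              ≤ b ^ ℓ * (L ^ ℓ * μ Set.univ) :=
                mul_le_mul_right (hP ℓ Set.univ MeasurableSet.univ) _
            _ = (b * L) ^ ℓ := by rw [hprob.measure_univ, mul_one, mul_pow]
      _ = (1 - b * L)⁻¹ := ENNReal.tsum_geometric _
      _ ≤ ENNReal.ofReal (a₁ / (a₁ - lam)) := by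
          rw [hbL, ← ENNReal.ofReal_one, ← ENNReal.ofReal_sub _ ht0,
            ← ENNReal.ofReal_inv_of_pos (by linarith)]
          apply ENNReal.ofReal_le_ofReal
          have h1 : 1 - a₁⁻¹ * lam = (a₁ - lam) / a₁ := by field_simp
          rw [h1, inv_div]

end QSDgen
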